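/- Let m = 2 and suppose h has an orthogonal basis with Gram matrix diag(1, −ε) where ε is a non-square unit of R, and the involution induced on A/r is the identity. Then h(v,v) is a unit of R for every primitive vector v ∈ V; in fact the set of lengths of primitive vectors equals R*. -/

import Mathlib

open MulOpposite

section LocalAux

variable {A : Type*} [Ring A] [IsLocalRing A]

lemma aux_isUnit_both {x y : A} (hxy : x * y = 1) : IsUnit x ∧ IsUnit y := by
  have he : (y * x) * (y * x) = y * x := by
    rw [mul_assoc, ← mul_assoc x, hxy, one_mul]
  rcases IsLocalRing.isUnit_or_isUnit_of_add_one
      (a := y * x) (b := 1 - y * x) (add_sub_cancel _ _) with hu | hu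
  · have h1 : y * x = 1 := by
      have := hu.mul_left_cancel (by rw [he, mul_one] : (y*x) * (y*x) = (y*x) * 1)
      exact this
    exact ⟨⟨⟨x, y, hxy, h1⟩, rfl⟩, ⟨⟨y, x, h1, hxy⟩, rfl⟩⟩
  · exfalso
    have hx0 : x * (1 - y * x) = 0 := by
      rw [mul_sub, mul_one, ← mul_assoc, hxy, one_mul, sub_self]
    have : x = 0 := by
      have := hu.mul_right_cancel (by rw [hx0, zero_mul] : x * (1 - y*x) = 0 * (1 - y*x))
      exact this
    rw [this, zero_mul] at hxy
    exact zero_ne_one hxy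

lemma aux_nonunit_mul_left {x : A} (hx : x ∈ nonunits A) (y : A) : x * y ∈ nonunits A := by
  intro hu
  rcases hu with ⟨u, hu⟩
  exact hx (aux_isUnit_both (x := x) (y := y * ↑u⁻¹)
    (by rw [← mul_assoc, ← hu, u.mul_inv])).1

lemma aux_nonunit_mul_right {x : A} (hx : x ∈ nonunits A) (y : A) : y * x ∈ nonunits A := by
  intro hu
  rcases hu with ⟨u, hu⟩
  exact hx (aux_isUnit_both (x := ↑u⁻¹ * y) (y := x)
    (by rw [mul_assoc, ← hu, u.inv_mul])).2

lemma aux_nonunits_add {a b : A} (ha : a ∈ nonunits A) (hb : b ∈ nonunits A) :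
    a + b ∈ nonunits A := by
  intro hu
  rcases hu with ⟨u, hu⟩
  have h1 : ↑u⁻¹ * a + ↑u⁻¹ * b = 1 := by rw [← mul_add, ← hu, u.inv_mul]
  rcases IsLocalRing.isUnit_or_isUnit_of_add_one h1 with h | h
  · exact ha (by have := u.isUnit.mul h; rwa [← mul_assoc, u.mul_inv, one_mul] at this)
  · exact hb (by have := u.isUnit.mul h; rwa [← mul_assoc, u.mul_inv, one_mul] at this)

end LocalAux

/-- A `*`-hermitian form on a right `A`-module `V` (right modules are encoded as
modules over the opposite ring `Aᵐᵒᵖ`): it is additive and `A`-linear in the second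
variable and satisfies `h v u = (h u v)*`. -/
structure HermitianForm (A V : Type*) [Ring A] [StarRing A] [AddCommGroup V]
    [Module Aᵐᵒᵖ V] where
  toFun : V → V → A
  add_right : ∀ u v w : V, toFun u (v + w) = toFun u v + toFun u w
  smul_right : ∀ (a : A) (u v : V), toFun u (op a • v) = toFun u v * a
  conj_symm : ∀ u v : V, toFun v u = star (toFun u v)

namespace HermitianForm

variable {A V : Type*} [Ring A] [StarRing A] [AddCommGroup V] [Module Aᵐᵒᵖ V]

/-- Non-degeneracy: the map `u ↦ h u -` is a bijection of `V` onto the dual module. -/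
def Nondeg (h : HermitianForm A V) : Prop :=
  ∀ φ : V →ₗ[Aᵐᵒᵖ] A, ∃! u : V, ∀ v : V, h.toFun u v = φ v

end HermitianForm

/-- A vector of the free module `V` of rank `m` is primitive if it belongs to a basis. -/
def IsPrimitive (A : Type*) {V : Type*} [Ring A] [AddCommGroup V] [Module Aᵐᵒᵖ V]
    (m : ℕ) (v : V) : Prop :=
  ∃ (b : Module.Basis (Fin m) Aᵐᵒᵖ V) (i : Fin m), b i = v

section PrimAux

variable {A V : Type*} [Ring A] [AddCommGroup V] [Module Aᵐᵒᵖ V]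

lemma aux_prim_of_unit (b : Module.Basis (Fin 2) Aᵐᵒᵖ V) {a : A} (c : A) (ha : IsUnit a) :
    IsPrimitive A 2 (op a • b 0 + op c • b 1) := by
  obtain ⟨u, rfl⟩ := ha
  set a' : A := ↑u⁻¹ with ha'
  set v : V := op (u : A) • b 0 + op c • b 1 with hv
  set f : V →ₗ[Aᵐᵒᵖ] V := b.constr ℕ ![v, b 1] with hf
  set g : V →ₗ[Aᵐᵒᵖ] V := b.constr ℕ ![op a' • b 0 - op (c * a') • b 1, b 1] with hg
  have hf0 : f (b 0) = v := by
    rw [hf, Module.Basis.constr_basis]; rfl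
  have hf1 : f (b 1) = b 1 := by
    rw [hf, Module.Basis.constr_basis]; rfl
  have hg0 : g (b 0) = op a' • b 0 - op (c * a') • b 1 := by
    rw [hg, Module.Basis.constr_basis]; rfl
  have hg1 : g (b 1) = b 1 := by
    rw [hg, Module.Basis.constr_basis]; rfl
  have hfg : f.comp g = LinearMap.id := by
    apply b.ext
    intro i
    fin_cases i
    · show f (g (b 0)) = b 0
      rw [hg0, map_sub, map_smul, map_smul, hf0, hf1, hv, smul_add]
      simp only [smul_smul, ← op_mul]
      rw [ha', Units.mul_inv]
      simp
    · show f (g (b 1)) = b 1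
      rw [hg1, hf1]
  have hgf : g.comp f = LinearMap.id := by
    apply b.ext
    intro i
    fin_cases i
    · show g (f (b 0)) = b 0
      rw [hf0, hv, map_add, map_smul, map_smul, hg0, hg1, smul_sub]
      simp only [smul_smul, ← op_mul, ha']
      simp
    · show g (f (b 1)) = b 1
      rw [hf1, hg1]
  refine ⟨b.map (LinearEquiv.ofLinear f g hfg hgf), 0, ?_⟩
  rw [Module.Basis.map_apply, LinearEquiv.ofLinear_apply, hf0, hv]

lemma aux_unit_coord {v : V} (b : Module.Basis (Fin 2) Aᵐᵒᵖ V) [IsLocalRing A]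
    (hp : IsPrimitive A 2 v) :
    IsUnit (unop (b.repr v 0)) ∨ IsUnit (unop (b.repr v 1)) := by
  by_contra hcon
  push_neg at hcon
  obtain ⟨hna, hnc⟩ := hcon
  obtain ⟨b', i, hib⟩ := hp
  have hsum : (b.repr v 0) • b 0 + (b.repr v 1) • b 1 = v := by
    have := b.sum_repr v
    rwa [Fin.sum_univ_two] at this
  have h1 : (b'.repr v) i = 1 := by
    rw [← hib, Module.Basis.repr_self, Finsupp.single_eq_same]
  have hexp : (b'.repr v) i =
      (b.repr v 0) * (b'.repr (b 0) i) + (b.repr v 1) * (b'.repr (b 1) i) := by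
    conv_lhs => rw [← hsum]
    rw [map_add, map_smul, map_smul, Finsupp.add_apply, Finsupp.smul_apply,
      Finsupp.smul_apply, smul_eq_mul, smul_eq_mul]
  rw [h1] at hexp
  have : (1 : A) ∈ nonunits A := by
    have e : (1 : A) = unop (b'.repr (b 0) i) * unop (b.repr v 0)
        + unop (b'.repr (b 1) i) * unop (b.repr v 1) := by
      have := congrArg unop hexp
      simpa [unop_mul] using this
    rw [e]
    exact aux_nonunits_add (aux_nonunit_mul_right hna _) (aux_nonunit_mul_right hnc _)
  exact this isUnit_one

end PrimAux

/-- Lemma 3.8(b), non-isotropic case: for a rank 2 form of type `{1, -ε}` with the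
induced involution on `A/𝔯` the identity, the lengths of primitive vectors are
exactly the units of the fixed ring `R`. -/
theorem stmt_12 {A V : Type*} [Ring A] [StarRing A] [IsLocalRing A]
    [AddCommGroup V] [Module Aᵐᵒᵖ V]
    (hcent : ∀ a : A, star a = a → a ∈ Set.center A)
    (h2 : IsUnit (2 : A))
    (R : Type*) [CommRing R] [IsLocalRing R] [Algebra R A]
    (hinj : Function.Injective (algebraMap R A))
    (hfix : ∀ a : A, star a = a ↔ a ∈ Set.range (algebraMap R A))
    [Finite (IsLocalRing.ResidueField R)]
    (hodd : Odd (Nat.card (IsLocalRing.ResidueField R)))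
    (hsq : ∀ x ∈ IsLocalRing.maximalIdeal R,
      ∃ y ∈ IsLocalRing.maximalIdeal R, (1 + y) ^ 2 = 1 + x)
    (hid : ∀ a : A, a - star a ∈ nonunits A)
    (ε : R) (hεu : IsUnit ε) (hεnsq : ¬ ∃ u : R, u ^ 2 = ε)
    (h : HermitianForm A V) (hnd : h.Nondeg)
    (b : Module.Basis (Fin 2) Aᵐᵒᵖ V)
    (hb01 : h.toFun (b 0) (b 1) = 0)
    (hb0 : h.toFun (b 0) (b 0) = 1)
    (hb1 : h.toFun (b 1) (b 1) = - algebraMap R A ε) :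
    (∀ v : V, IsPrimitive A 2 v →
      ∃ r : R, IsUnit r ∧ h.toFun v v = algebraMap R A r) ∧
    (∀ r : R, IsUnit r →
      ∃ v : V, IsPrimitive A 2 v ∧ h.toFun v v = algebraMap R A r) := by
  classical
  set φ := algebraMap R A with hφdef
  set ρ := IsLocalRing.residue R with hρdef
  -- basic facts about the fixed ring
  have hstarφ : ∀ r : R, star (φ r) = φ r := fun r => (hfix _).mpr ⟨r, rfl⟩
  have hcomm : ∀ (r : R) (x : A), φ r * x = x * φ r := fun r x =>
    ((hcent _ (hstarφ r)).comm x)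
  have hunit : ∀ r : R, IsUnit (φ r) ↔ IsUnit r := by
    intro r
    constructor
    · rintro ⟨u, hu⟩
      have hsu : star (↑u⁻¹ : A) = ↑u⁻¹ := by
        have h2' : star (↑u⁻¹ : A) * (↑u : A) = 1 := by
          have := congrArg star u.mul_inv
          rwa [star_mul, star_one, hu, hstarφ, ← hu] at this
        have : (star (↑u⁻¹ : A) * ↑u) * ↑u⁻¹ = ↑u⁻¹ := by rw [h2', one_mul]
        rwa [mul_assoc, u.mul_inv, mul_one] at this
      obtain ⟨s, hs⟩ := (hfix _).mp hsu
      have : φ (r * s) = φ 1 := by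
        rw [map_mul, map_one, ← hu, hs, u.mul_inv]
      exact IsUnit.of_mul_eq_one s (hinj this)
    · intro hr
      exact hr.map φ
  have hφnonunit : ∀ r : R, φ r ∈ nonunits A → ¬ IsUnit r := fun r hn hr =>
    hn ((hunit r).mpr hr)
  have hφ2 : φ (2 : R) = (2 : A) := by
    rw [show (2:R) = 1 + 1 by norm_num, map_add, map_one]; norm_num
  have h2R : IsUnit (2 : R) := (hunit 2).mp (by rw [hφ2]; exact h2)
  -- decomposition a = φ s + (nonunit)
  have hdec : ∀ a : A, ∃ s : R, a - φ s ∈ nonunits A := by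
    intro a
    obtain ⟨w, hw⟩ := (hfix (a + star a)).mp (by rw [star_add, star_star, add_comm])
    obtain ⟨u2, hu2⟩ := h2R
    refine ⟨w * ↑u2⁻¹, ?_⟩
    set c : A := φ (↑u2⁻¹ : R) with hc
    have hc2 : c + c = (1 : A) := by
      have : φ ((2:R) * ↑u2⁻¹) = φ 1 := by
        rw [← hu2, u2.mul_inv]
      rw [map_mul, hφ2, map_one, two_mul] at this
      exact this
    have key : a - φ (w * ↑u2⁻¹) = (a - star a) * c := by
      rw [map_mul, hw, ← hc]
      calc a - (a + star a) * c
          = a * (c + c) - (a + star a) * c := by rw [hc2, mul_one]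
        _ = (a - star a) * c := by noncomm_ring
    rw [key]
    exact aux_nonunit_mul_left (hid a) c
  -- star a * a lands in R
  have hsym : ∀ a : A, ∃ r : R, φ r = star a * a := fun a =>
    (hfix _).mp (by rw [star_mul, star_star])
  -- residues
  have hρ0 : ∀ r : R, ρ r = 0 ↔ ¬ IsUnit r := fun r => by
    rw [hρdef, IsLocalRing.residue_eq_zero_iff, IsLocalRing.mem_maximalIdeal,
      mem_nonunits_iff]
  have hρsurj : Function.Surjective ρ := IsLocalRing.residue_surjective
  have hεne : ρ ε ≠ 0 := fun h0 => ((hρ0 ε).mp h0) hεu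
  -- adjust a residue-level equality to an exact one using surjectivity of squaring on 1+m
  have hadjust : ∀ (r w : R), IsUnit r → ρ w = ρ r → ∃ d : R, IsUnit d ∧ d^2 * w = r := by
    intro r w hr hw
    obtain ⟨u, hu⟩ := hr
    set x : R := ↑u⁻¹ * w - 1 with hx
    have hxm : x ∈ IsLocalRing.maximalIdeal R := by
      rw [← IsLocalRing.residue_eq_zero_iff, ← hρdef]
      have : ρ (↑u⁻¹ * ↑u) = 1 := by rw [u.inv_mul, map_one]
      rw [hx, map_sub, map_mul, hw, ← hu, ← map_mul, this, map_one, sub_self]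
    obtain ⟨y, hym, hy⟩ := hsq x hxm
    have h1y : IsUnit (1 + y) := by
      by_contra hn
      have h0 : ρ (1 + y) = 0 := (hρ0 _).mpr hn
      have hy0 : ρ y = 0 := by
        rw [hρdef, IsLocalRing.residue_eq_zero_iff]; exact hym
      rw [map_add, map_one, hy0, add_zero] at h0
      exact one_ne_zero h0
    obtain ⟨e, he⟩ := h1y
    have hw' : w = ↑u * (1 + y)^2 := by
      rw [hy, hx]
      have : (↑u : R) * (↑u⁻¹ * w) = w := by rw [← mul_assoc, u.mul_inv, one_mul]
      calc w = ↑u * (↑u⁻¹ * w) := this.symm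
        _ = ↑u * (1 + (↑u⁻¹ * w - 1)) := by ring
    refine ⟨↑e⁻¹, (e⁻¹ : Rˣ).isUnit, ?_⟩
    have key : (↑e⁻¹ : R)^2 * w = ↑u * ((↑e⁻¹ : R) * ↑e)^2 := by
      rw [hw', ← he]; ring
    rw [key, e.inv_mul, one_pow, mul_one, hu]
  -- ε is a non-square modulo the maximal ideal
  have hεnsqk : ¬ ∃ z : IsLocalRing.ResidueField R, z^2 = ρ ε := by
    rintro ⟨z, hz⟩
    obtain ⟨t, rfl⟩ := hρsurj z
    have h1 : ρ (t^2) = ρ ε := by rw [map_pow]; exact hz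
    obtain ⟨d, hd, hd2⟩ := hadjust ε (t^2) hεu h1
    exact hεnsq ⟨d * t, by rw [mul_pow]; exact hd2⟩
  -- every unit of R is represented by s² - ε t²
  have hrep : ∀ r : R, IsUnit r → ∃ s t : R, s^2 - ε * t^2 = r := by
    intro r hr
    haveI : Fintype (IsLocalRing.ResidueField R) := Fintype.ofFinite _
    have hcard : Fintype.card (IsLocalRing.ResidueField R) % 2 = 1 := by
      rw [← Nat.card_eq_fintype_card]; exact Nat.odd_iff.mp hodd
    obtain ⟨x, y, hxy⟩ := FiniteField.exists_root_sum_quadratic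
      (f := Polynomial.X^2 - Polynomial.C (ρ r))
      (g := Polynomial.C (-(ρ ε)) * Polynomial.X^2)
      (Polynomial.degree_X_pow_sub_C (by norm_num) _)
      (by rw [Polynomial.degree_C_mul_X_pow _ (neg_ne_zero.mpr hεne)]; rfl) hcard
    simp only [Polynomial.eval_add, Polynomial.eval_sub, Polynomial.eval_mul,
      Polynomial.eval_pow, Polynomial.eval_X, Polynomial.eval_C] at hxy
    obtain ⟨s, rfl⟩ := hρsurj x
    obtain ⟨t, rfl⟩ := hρsurj y
    have hρeq : ρ (s^2 - ε * t^2) = ρ r := by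
      rw [map_sub, map_mul, map_pow, map_pow]
      linear_combination hxy
    obtain ⟨d, hd, hd2⟩ := hadjust r (s^2 - ε * t^2) hr hρeq
    exact ⟨d * s, d * t, by rw [mul_pow, mul_pow]; linear_combination hd2⟩
  -- hermitian form computations
  have hsl : ∀ (a : A) (u w : V), h.toFun (op a • u) w = star a * h.toFun u w := by
    intro a u w
    rw [h.conj_symm w (op a • u), h.smul_right, star_mul, ← h.conj_symm w u]
  have hal : ∀ (u v w : V), h.toFun (u + v) w = h.toFun u w + h.toFun v w := by
    intro u v w
    rw [h.conj_symm w (u + v), h.add_right, star_add, ← h.conj_symm w u, ← h.conj_symm w v]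
  have hb10 : h.toFun (b 1) (b 0) = 0 := by
    rw [h.conj_symm (b 0) (b 1), hb01, star_zero]
  have hvv : ∀ a c : A, h.toFun (op a • b 0 + op c • b 1) (op a • b 0 + op c • b 1)
      = star a * a - φ ε * (star c * c) := by
    intro a c
    rw [hal, hsl, hsl, h.add_right, h.add_right, h.smul_right, h.smul_right,
      h.smul_right, h.smul_right, hb0, hb01, hb1, hb10]
    simp only [one_mul, zero_mul, add_zero, zero_add, neg_mul, mul_neg]
    rw [hcomm ε c, ← mul_assoc, ← hcomm ε (star c * c), sub_eq_add_neg]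
  constructor
  · -- every primitive vector has unit length in R
    intro v hp
    set a : A := unop (b.repr v 0) with hadef
    set c : A := unop (b.repr v 1) with hcdef
    have hvrepr : v = op a • b 0 + op c • b 1 := by
      have hs := b.sum_repr v
      rw [Fin.sum_univ_two] at hs
      rw [← hs, hadef, hcdef, op_unop, op_unop]
    obtain ⟨r1, hr1⟩ := hsym a
    obtain ⟨r2, hr2⟩ := hsym c
    have hval : h.toFun v v = φ (r1 - ε * r2) := by
      rw [hvrepr, hvv, ← hr1, ← hr2, map_sub, map_mul]
    refine ⟨r1 - ε * r2, ?_, hval⟩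
    have hac := aux_unit_coord b hp
    rw [← hadef, ← hcdef] at hac
    -- residues of r1, r2 are squares
    have hsq' : ∀ (z : A) (rz : R), φ rz = star z * z → ∃ s : R, ρ rz = (ρ s)^2 := by
      intro z rz hrz
      obtain ⟨s, hsn⟩ := hdec z
      refine ⟨s, ?_⟩
      have hstn : star (z - φ s) ∈ nonunits A := fun hu =>
        hsn (isUnit_star.mp hu)
      have hnon : φ (rz - s^2) ∈ nonunits A := by
        have expand : φ (rz - s^2) =
            φ s * (z - φ s) + star (z - φ s) * φ s + star (z - φ s) * (z - φ s) := by
          rw [map_sub, hrz, star_sub, hstarφ, map_pow, pow_two]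
          noncomm_ring
        rw [expand]
        exact aux_nonunits_add (aux_nonunits_add
          (aux_nonunit_mul_right hsn _) (aux_nonunit_mul_left hstn _))
          (aux_nonunit_mul_left hstn _)
      have h0 : ρ (rz - s^2) = 0 := (hρ0 _).mpr (hφnonunit _ hnon)
      rw [map_sub, map_pow, sub_eq_zero] at h0
      exact h0
    obtain ⟨s, hs⟩ := hsq' a r1 hr1
    obtain ⟨t, ht⟩ := hsq' c r2 hr2
    have hu12 : IsUnit r1 ∨ IsUnit r2 := by
      rcases hac with hA | hC
      · exact Or.inl ((hunit r1).mp (by rw [hr1]; exact (isUnit_star.mpr hA).mul hA))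
      · exact Or.inr ((hunit r2).mp (by rw [hr2]; exact (isUnit_star.mpr hC).mul hC))
    by_contra hnu
    have h0 : ρ (r1 - ε * r2) = 0 := (hρ0 _).mpr hnu
    rw [map_sub, map_mul, hs, ht, sub_eq_zero] at h0
    by_cases hT : ρ t = 0
    · rw [hT] at h0
      have hs0 : ρ s = 0 := by
        have : (ρ s)^2 = 0 := by rw [h0]; ring
        exact pow_eq_zero_iff (by norm_num) |>.mp this
      have hr10 : ¬ IsUnit r1 := (hρ0 r1).mp (by rw [hs, hs0]; ring)
      have hr20 : ¬ IsUnit r2 := (hρ0 r2).mp (by rw [ht, hT]; ring)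
      rcases hu12 with hX | hX
      · exact hr10 hX
      · exact hr20 hX
    · refine hεnsqk ⟨ρ s * (ρ t)⁻¹, ?_⟩
      field_simp
      linear_combination h0
  · -- every unit of R is the length of a primitive vector
    intro r hr
    obtain ⟨s, t, hst⟩ := hrep r hr
    have hstu : IsUnit s ∨ IsUnit t := by
      by_contra hcon
      push_neg at hcon
      have hmem : s^2 - ε * t^2 ∈ nonunits R := by
        have e : s^2 - ε * t^2 = s * s + (-(ε * t)) * t := by ring
        rw [e]
        exact aux_nonunits_add (aux_nonunit_mul_left (hcon.1) s)
          (aux_nonunit_mul_right (hcon.2) _)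
      rw [hst] at hmem
      exact hmem hr
    have hcomp : h.toFun (op (φ s) • b 0 + op (φ t) • b 1)
        (op (φ s) • b 0 + op (φ t) • b 1) = φ r := by
      rw [hvv, hstarφ, hstarφ, ← map_mul, ← map_mul, ← map_mul, ← map_sub]
      exact congrArg φ (by linear_combination hst)
    rcases hstu with hS | hT
    · exact ⟨_, aux_prim_of_unit b (φ t) ((hunit s).mpr hS), hcomp⟩
    · set b' := b.reindex (Equiv.swap 0 1) with hb'def
      have hb'0 : b' 0 = b 1 := by
        rw [hb'def, Module.Basis.reindex_apply, Equiv.symm_swap, Equiv.swap_apply_left]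
      have hb'1 : b' 1 = b 0 := by
        rw [hb'def, Module.Basis.reindex_apply, Equiv.symm_swap, Equiv.swap_apply_right]
      have hprim := aux_prim_of_unit b' (φ s) ((hunit t).mpr hT)
      rw [hb'0, hb'1, add_comm] at hprim
      exact ⟨_, hprim, hcomp⟩
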